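/- Let ψ ∈ ℝ and let F, G : [0, 4π] → ℝ be continuous functions with |F(φ) − cos(ψ + φ/2)| ≤ 1/10 and |G(φ) − sin(ψ + φ/2)| ≤ 1/10 for all φ ∈ [0, 4π]. Then for every t ∈ ℝ there exists φ ∈ [0, 4π] such that G(φ) = t·F(φ) and F(φ) ≠ 0 (so that G(φ)/F(φ) = t). -/

import Mathlib

open Set Real

lemma phase_selection_aux (y : ℝ)
    (h1 : |(0:ℝ) - Real.cos y| ≤ 1/10) (h2 : |(0:ℝ) - Real.sin y| ≤ 1/10) : False := by
  have hpyth := Real.sin_sq_add_cos_sq y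
  have h1' := abs_le.mp h1
  have h2' := abs_le.mp h2
  have hc : (Real.cos y)^2 ≤ (1/10)^2 :=
    sq_le_sq' (by linarith [h1'.1, h1'.2]) (by linarith [h1'.1, h1'.2])
  have hsn : (Real.sin y)^2 ≤ (1/10)^2 :=
    sq_le_sq' (by linarith [h2'.1, h2'.2]) (by linarith [h2'.1, h2'.2])
  norm_num at hc hsn
  linarith

/-- **Phase-selection lemma.**
If `F, G` are continuous on `[0, 4π]` and uniformly within `1/10` of `cos(ψ + φ/2)` and
`sin(ψ + φ/2)` respectively, then for every prescribed `t ∈ ℝ` there is a phase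
`φ ∈ [0, 4π]` with `G(φ) = t·F(φ)` and `F(φ) ≠ 0`, i.e. `G(φ)/F(φ) = t`. -/
theorem phase_selection
    (ψ : ℝ) (F G : ℝ → ℝ)
    (hF : ContinuousOn F (Icc 0 (4 * Real.pi)))
    (hG : ContinuousOn G (Icc 0 (4 * Real.pi)))
    (hFb : ∀ φ ∈ Icc (0 : ℝ) (4 * Real.pi), |F φ - Real.cos (ψ + φ / 2)| ≤ 1 / 10)
    (hGb : ∀ φ ∈ Icc (0 : ℝ) (4 * Real.pi), |G φ - Real.sin (ψ + φ / 2)| ≤ 1 / 10) :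
    ∀ t : ℝ, ∃ φ ∈ Icc (0 : ℝ) (4 * Real.pi), G φ = t * F φ ∧ F φ ≠ 0 := by
  intro t
  have hπ : (0:ℝ) < π := Real.pi_pos
  set θ := Real.arctan t with hθ
  set a : ℝ := θ - π/2 - ψ with ha
  set m : ℤ := ⌊a / π⌋ with hm
  set r : ℝ := π * Int.fract (a / π) with hr
  have hr0 : 0 ≤ r := mul_nonneg hπ.le (Int.fract_nonneg _)
  have hr1 : r < π := by
    have h1 := Int.fract_lt_one (a / π)
    calc r < π * 1 := by exact mul_lt_mul_of_pos_left h1 hπ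
      _ = π := mul_one π
  have har : a = π * m + r := by
    rw [hr, Int.fract]
    field_simp
    rw [hm]; ring
  set φ₁ : ℝ := 2 * r with hφ₁
  set φ₂ : ℝ := 2 * r + 2 * π with hφ₂
  have hmem₁ : φ₁ ∈ Icc (0:ℝ) (4 * π) := by
    constructor <;> [positivity; nlinarith]
  have hmem₂ : φ₂ ∈ Icc (0:ℝ) (4 * π) := by
    constructor <;> nlinarith
  have hsub : Icc φ₁ φ₂ ⊆ Icc (0:ℝ) (4 * π) :=
    Icc_subset_Icc hmem₁.1 hmem₂.2
  set x : ℝ := ψ + φ₁ / 2 with hx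
  -- trig computations
  set e : ℝ := Real.cos (π * m) with he
  have hsinm : Real.sin (π * m) = 0 := by
    rw [mul_comm]; exact Real.sin_int_mul_pi m
  have he2 : e * e = 1 := by
    have := Real.sin_sq_add_cos_sq (π * m)
    nlinarith [this, hsinm]
  have hxeq : x = θ - π/2 - π * m := by
    rw [hx, hφ₁]
    have : r = a - π * m := by linarith [har]
    rw [this, ha]; ring
  have hsinx : Real.sin x = -e * Real.cos θ := by
    rw [hxeq]
    have : θ - π/2 - π * m = θ - (π/2 + π * m) := by ring
    rw [this, Real.sin_sub, Real.cos_add, Real.sin_add]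
    simp [hsinm, he]
    ring
  have hcosx : Real.cos x = e * Real.sin θ := by
    rw [hxeq]
    have : θ - π/2 - π * m = θ - (π/2 + π * m) := by ring
    rw [this, Real.cos_sub, Real.cos_add, Real.sin_add]
    simp [hsinm, he]
    ring
  set s : ℝ := Real.sqrt (1 + t^2) with hs
  have hs2 : s^2 = 1 + t^2 := Real.sq_sqrt (by positivity)
  have hs1 : 1 ≤ s := by nlinarith [Real.sqrt_nonneg (1 + t^2)]
  have hst : |t| ≤ s := by nlinarith [abs_nonneg t, sq_abs t]
  have hcosθ : Real.cos θ = 1 / s := by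
    rw [hθ, Real.cos_arctan, hs]
  have hsinθ : Real.sin θ = t / s := by
    rw [hθ, Real.sin_arctan, hs]
  set u : ℝ := Real.sin x - t * Real.cos x with hu
  have hueq : u = -e * s := by
    rw [hu, hsinx, hcosx, hcosθ, hsinθ]
    field_simp
    linear_combination e * hs2
  have hx2 : ψ + φ₂ / 2 = x + π := by rw [hx, hφ₁, hφ₂]; ring
  have hu2 : Real.sin (ψ + φ₂/2) - t * Real.cos (ψ + φ₂/2) = -u := by
    rw [hx2, Real.sin_add_pi, Real.cos_add_pi, hu]; ring
  set H : ℝ → ℝ := fun φ => G φ - t * F φ with hH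
  have hHcont : ContinuousOn H (Icc φ₁ φ₂) :=
    ((hG.sub (continuousOn_const.mul hF))).mono hsub
  set ε : ℝ := (1 + |t|) / 10 with hε
  have hεs : ε < s := by
    rw [hε]; linarith [hst, hs1]
  have hbound : ∀ φ ∈ Icc (0:ℝ) (4*π),
      |H φ - (Real.sin (ψ + φ/2) - t * Real.cos (ψ + φ/2))| ≤ ε := by
    intro φ hφ
    have h1 := hFb φ hφ
    have h2 := hGb φ hφ
    have : H φ - (Real.sin (ψ + φ/2) - t * Real.cos (ψ + φ/2))
        = (G φ - Real.sin (ψ + φ/2)) - t * (F φ - Real.cos (ψ + φ/2)) := by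
      rw [hH]; ring
    rw [this, hε]
    calc |(G φ - Real.sin (ψ + φ/2)) - t * (F φ - Real.cos (ψ + φ/2))|
        ≤ |G φ - Real.sin (ψ + φ/2)| + |t * (F φ - Real.cos (ψ + φ/2))| := abs_sub _ _
      _ ≤ 1/10 + |t| * (1/10) := by
          rw [abs_mul]
          gcongr
      _ = (1 + |t|)/10 := by ring
  have hb1 : |H φ₁ - u| ≤ ε := by
    have := hbound φ₁ hmem₁
    rwa [← hx, ← hu] at this
  have hb2 : |H φ₂ - (-u)| ≤ ε := by
    have := hbound φ₂ hmem₂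
    rwa [hu2] at this
  have habs1 := abs_le.mp hb1
  have habs2 := abs_le.mp hb2
  have hzero : (0:ℝ) ∈ uIcc (H φ₁) (H φ₂) := by
    rcases mul_self_eq_one_iff.mp he2 with h | h
    · -- e = 1 : u = -s
      have hu' : u = -s := by rw [hueq, h]; ring
      rw [Set.mem_uIcc]
      left
      rw [hu'] at habs1 habs2
      constructor <;> linarith [habs1.1, habs1.2, habs2.1, habs2.2, hεs]
    · have hu' : u = s := by rw [hueq, h]; ring
      rw [Set.mem_uIcc]
      right
      rw [hu'] at habs1 habs2
      constructor <;> linarith [habs1.1, habs1.2, habs2.1, habs2.2, hεs]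
  have hle : φ₁ ≤ φ₂ := by rw [hφ₁, hφ₂]; linarith
  have := intermediate_value_uIcc (by rwa [Set.uIcc_of_le hle] : ContinuousOn H (uIcc φ₁ φ₂)) hzero
  obtain ⟨φ, hφmem, hφeq⟩ := this
  rw [Set.uIcc_of_le hle] at hφmem
  have hφIcc : φ ∈ Icc (0:ℝ) (4*π) := hsub hφmem
  refine ⟨φ, hφIcc, ?_, ?_⟩
  · have : G φ - t * F φ = 0 := hφeq
    linarith
  · intro hF0
    have hG0 : G φ = 0 := by
      have : G φ - t * F φ = 0 := hφeq
      rw [hF0] at this; linarith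
    have h1 := hFb φ hφIcc
    have h2 := hGb φ hφIcc
    rw [hF0] at h1
    rw [hG0] at h2
    exact phase_selection_aux (ψ + φ/2) h1 h2
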